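/- Let p ≥ 1, let E₁,…,Eₙ be normed spaces over 𝕂, and let f : E₁⊗⋯⊗Eₙ → 𝕂 be a linear functional such that |f(u)| ≤ C·σ_p(u) for all u ∈ E₁⊗⋯⊗Eₙ, where C ≥ 0. Then the n-linear form A(x₁,…,xₙ) = f(x₁⊗⋯⊗xₙ) satisfies, for every m ∈ ℕ and all x_{l,j} ∈ E_l (l = 1,…,n, j = 1,…,m): ( Σ_{j=1}^m |A(x_{1,j},…,x_{n,j})|^p )^{1/p} ≤ C · ( sup_{φ_l ∈ E_l', ‖φ_l‖ ≤ 1} Σ_{j=1}^m |φ₁(x_{1,j})⋯φₙ(x_{n,j})|^p )^{1/p}. -/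

import Mathlib

open scoped TensorProduct
open PiTensorProduct

/-- The `ℓ_q` norm of a finite family of scalars, where `q` is the conjugate exponent
of `p` (`1/p + 1/q = 1`, with `q = ∞`, i.e. the sup norm, when `p = 1`). -/
noncomputable def lqNorm {𝕜 : Type*} [RCLike 𝕜] (p : ℝ) {m : ℕ} (lam : Fin m → 𝕜) : ℝ :=
  if p = 1 then ⨆ j, ‖lam j‖ else (∑ j, ‖lam j‖ ^ (p / (p - 1))) ^ ((p - 1) / p)

/-- `sup_{‖φ_l‖ ≤ 1} Σ_j |φ₁(x_{1,j}) ⋯ φₙ(x_{n,j})|^p`. -/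
noncomputable def supTerm (𝕜 : Type*) [RCLike 𝕜] {n : ℕ} {E : Fin n → Type*}
    [∀ i, NormedAddCommGroup (E i)] [∀ i, NormedSpace 𝕜 (E i)]
    (p : ℝ) {m : ℕ} (x : Fin m → Π i, E i) : ℝ :=
  ⨆ φ : {φ : Π i, E i →L[𝕜] 𝕜 // ∀ i, ‖φ i‖ ≤ 1},
    ∑ j, (∏ i, ‖φ.1 i (x j i)‖) ^ p

/-- The tensor norm `σ_p` on `E₁ ⊗ ⋯ ⊗ Eₙ`. -/
noncomputable def sigmaNorm {𝕜 : Type*} [RCLike 𝕜] {n : ℕ} {E : Fin n → Type*}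
    [∀ i, NormedAddCommGroup (E i)] [∀ i, NormedSpace 𝕜 (E i)]
    (p : ℝ) (u : ⨂[𝕜] i, E i) : ℝ :=
  sInf { r : ℝ | ∃ (m : ℕ) (lam : Fin m → 𝕜) (x : Fin m → Π i, E i),
    u = (∑ j, lam j • ⨂ₜ[𝕜] i, x j i) ∧
    r = lqNorm p lam * (supTerm 𝕜 p x) ^ (1/p) }

lemma lqNorm_nonneg {𝕜 : Type*} [RCLike 𝕜] (p : ℝ) {m : ℕ} (lam : Fin m → 𝕜) :
    0 ≤ lqNorm p lam := by
  unfold lqNorm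
  split
  · exact Real.iSup_nonneg fun j => norm_nonneg _
  · exact Real.rpow_nonneg
      (Finset.sum_nonneg fun j _ => Real.rpow_nonneg (norm_nonneg _) _) _

lemma supTerm_nonneg (𝕜 : Type*) [RCLike 𝕜] {n : ℕ} {E : Fin n → Type*}
    [∀ i, NormedAddCommGroup (E i)] [∀ i, NormedSpace 𝕜 (E i)]
    (p : ℝ) {m : ℕ} (x : Fin m → Π i, E i) : 0 ≤ supTerm 𝕜 p x :=
  Real.iSup_nonneg fun _ => Finset.sum_nonneg fun _ _ =>
    Real.rpow_nonneg (Finset.prod_nonneg fun _ _ => norm_nonneg _) _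

lemma sigmaNorm_le_rep {𝕜 : Type*} [RCLike 𝕜] {n : ℕ} {E : Fin n → Type*}
    [∀ i, NormedAddCommGroup (E i)] [∀ i, NormedSpace 𝕜 (E i)]
    (p : ℝ) {m : ℕ} (lam : Fin m → 𝕜) (x : Fin m → Π i, E i) :
    sigmaNorm p (∑ j, lam j • ⨂ₜ[𝕜] i, x j i) ≤
      lqNorm p lam * (supTerm 𝕜 p x) ^ (1/p) := by
  apply csInf_le
  · refine ⟨0, fun r hr => ?_⟩
    obtain ⟨m', lam', x', -, rfl⟩ := hr
    exact mul_nonneg (lqNorm_nonneg _ _) (Real.rpow_nonneg (supTerm_nonneg _ _ _) _)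
  · exact ⟨m, lam, x, rfl, rfl⟩

/-- If a linear functional `f` on `E₁ ⊗ ⋯ ⊗ Eₙ` satisfies `|f(u)| ≤ C·σ_p(u)`, then the
`n`-linear form `A(x₁, …, xₙ) = f(x₁ ⊗ ⋯ ⊗ xₙ)` is `p`-semi-integral with constant `C`. -/
theorem semiIntegral_of_sigma_bounded {𝕜 : Type*} [RCLike 𝕜] {n : ℕ} (hn : 1 ≤ n)
    (E : Fin n → Type*) [∀ i, NormedAddCommGroup (E i)] [∀ i, NormedSpace 𝕜 (E i)]
    (p : ℝ) (hp : 1 ≤ p) (C : ℝ) (hC : 0 ≤ C)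
    (f : (⨂[𝕜] i, E i) →ₗ[𝕜] 𝕜) (hf : ∀ u, ‖f u‖ ≤ C * sigmaNorm p u)
    (m : ℕ) (x : Fin m → Π i, E i) :
    (∑ j, ‖f (⨂ₜ[𝕜] i, x j i)‖ ^ p) ^ (1/p) ≤ C * (supTerm 𝕜 p x) ^ (1/p) := by
  classical
  have hp0 : 0 < p := lt_of_lt_of_le one_pos hp
  set c : Fin m → 𝕜 := fun j => f (⨂ₜ[𝕜] i, x j i) with hc
  set a : Fin m → ℝ := fun j => ‖c j‖ with ha
  have ha0 : ∀ j, 0 ≤ a j := fun j => norm_nonneg _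
  set T : ℝ := ∑ j, a j ^ p with hT
  have hT0 : 0 ≤ T := Finset.sum_nonneg fun j _ => Real.rpow_nonneg (ha0 j) p
  set S : ℝ := supTerm 𝕜 p x with hS
  have hS0 : 0 ≤ S := supTerm_nonneg 𝕜 p x
  set lam : Fin m → 𝕜 := fun j =>
    if c j = 0 then 0 else ((a j ^ (p - 2) : ℝ) : 𝕜) * (starRingEnd 𝕜) (c j) with hlam
  have hnl : ∀ j, c j ≠ 0 → ‖lam j‖ = a j ^ (p - 1) := by
    intro j hj
    have haj : 0 < a j := norm_pos_iff.mpr hj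
    simp only [hlam, if_neg hj, norm_mul, RCLike.norm_conj, RCLike.norm_ofReal,
      abs_of_nonneg (Real.rpow_nonneg (ha0 j) _)]
    calc a j ^ (p - 2) * ‖c j‖ = a j ^ (p - 2) * a j ^ (1 : ℝ) := by
          rw [Real.rpow_one]
      _ = a j ^ (p - 2 + 1) := (Real.rpow_add haj _ _).symm
      _ = a j ^ (p - 1) := by ring_nf
  have hmul : ∀ j, lam j * c j = ((a j ^ p : ℝ) : 𝕜) := by
    intro j
    by_cases hj : c j = 0
    · have : a j = 0 := by rw [ha]; simp [hj]
      simp [hlam, hj, this, Real.zero_rpow (ne_of_gt hp0)]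
    · have haj : 0 < a j := norm_pos_iff.mpr hj
      simp only [hlam, if_neg hj]
      rw [mul_assoc, RCLike.conj_mul]
      have h2 : (‖c j‖ : 𝕜) ^ 2 = ((a j ^ (2 : ℝ) : ℝ) : 𝕜) := by
        rw [← RCLike.ofReal_pow]
        norm_cast
      rw [h2, ← RCLike.ofReal_mul, ← Real.rpow_add haj]
      norm_num
  have hfu : f (∑ j, lam j • ⨂ₜ[𝕜] i, x j i) = ((T : ℝ) : 𝕜) := by
    rw [map_sum]
    simp only [map_smul, smul_eq_mul]
    rw [hT, RCLike.ofReal_sum]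
    exact Finset.sum_congr rfl fun j _ => hmul j
  have hfn : T ≤ C * sigmaNorm p (∑ j, lam j • ⨂ₜ[𝕜] i, x j i) := by
    have := hf (∑ j, lam j • ⨂ₜ[𝕜] i, x j i)
    rwa [hfu, RCLike.norm_ofReal, abs_of_nonneg hT0] at this
  have hkey : T ≤ C * (lqNorm p lam * S ^ (1/p)) :=
    hfn.trans (mul_le_mul_of_nonneg_left (sigmaNorm_le_rep p lam x) hC)
  by_cases hp1 : p = 1
  · subst hp1
    simp only [one_div, inv_one, Real.rpow_one] at hkey ⊢
    have hL : lqNorm 1 lam ≤ 1 := by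
      unfold lqNorm
      rw [if_pos rfl]
      refine Real.iSup_le (fun j => ?_) zero_le_one
      by_cases hj : c j = 0
      · rw [hlam]
        simp [hj]
      · rw [hnl j hj]
        norm_num
    calc T ≤ C * (lqNorm 1 lam * S) := hkey
      _ ≤ C * (1 * S) := by
          exact mul_le_mul_of_nonneg_left (mul_le_mul_of_nonneg_right hL hS0) hC
      _ = C * S := by ring
  · have hp1' : 1 < p := lt_of_le_of_ne hp (Ne.symm hp1)
    have hpm1 : 0 < p - 1 := by linarith
    have hL : lqNorm p lam = T ^ ((p - 1) / p) := by
      unfold lqNorm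
      rw [if_neg hp1]
      congr 1
      rw [hT]
      refine Finset.sum_congr rfl fun j _ => ?_
      by_cases hj : c j = 0
      · have haj : a j = 0 := by rw [ha]; simp [hj]
        rw [haj, Real.zero_rpow (ne_of_gt hp0)]
        have : ‖lam j‖ = 0 := by simp [hlam, hj]
        rw [this, Real.zero_rpow]
        positivity
      · rw [hnl j hj, ← Real.rpow_mul (ha0 j)]
        congr 1
        field_simp
    rw [hL] at hkey
    rcases eq_or_lt_of_le hT0 with hTz | hTpos
    · rw [← hTz, Real.zero_rpow (by positivity : (1/p : ℝ) ≠ 0)]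
      positivity
    · have hsplit : T = T ^ ((p - 1) / p) * T ^ (1/p) := by
        rw [← Real.rpow_add hTpos]
        rw [← add_div]
        have : (p - 1 + 1) / p = 1 := by field_simp; ring
        rw [this, Real.rpow_one]
      have h2 : T ^ ((p - 1) / p) * T ^ (1/p) ≤ T ^ ((p - 1) / p) * (C * S ^ (1/p)) := by
        calc T ^ ((p - 1) / p) * T ^ (1/p) = T := hsplit.symm
          _ ≤ C * (T ^ ((p - 1) / p) * S ^ (1/p)) := hkey
          _ = T ^ ((p - 1) / p) * (C * S ^ (1/p)) := by ring
      exact le_of_mul_le_mul_left h2 (Real.rpow_pos_of_pos hTpos _)
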